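/- arXiv:1709.06301 — 3 statements merged into one kernel-verified Lean document; each statement's English description precedes it below -/
import Mathlib

section
/- For integers n ≥ 3 and m ≥ 2, the F-index of the edge S-join of the cycle C_n and the path P_m is F(C_n ∨̱_S P_m) = n{(m + 2)³ + 6n(m − 1) + mn²} + 12mn + 8m − 10n − 14. -/
/-- The subdivision graph `S(G)`: a new vertex is inserted into each edge of `G`
(each edge is replaced by a path of length 2). The inserted vertices form the
right summand `↥G.edgeSet`. -/
def Sgraph {V : Type*} (G : SimpleGraph V) : SimpleGraph (V ⊕ ↥G.edgeSet) where
  Adj x y :=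
    match x, y with
    | Sum.inl v, Sum.inr e => v ∈ (e : Sym2 V)
    | Sum.inr e, Sum.inl v => v ∈ (e : Sym2 V)
    | _, _ => False
  symm := by constructor; rintro (v | e) (w | f) h <;> exact h
  loopless := by constructor; rintro (v | e) h <;> exact h

/-- The graph `R(G)`: obtained from `G` by inserting a new vertex into each edge of `G`
and joining each new vertex to the end vertices of its corresponding edge. -/
def Rgraph {V : Type*} (G : SimpleGraph V) : SimpleGraph (V ⊕ ↥G.edgeSet) where
  Adj x y :=
    match x, y with
    | Sum.inl v, Sum.inl w => G.Adj v w
    | Sum.inl v, Sum.inr e => v ∈ (e : Sym2 V)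
    | Sum.inr e, Sum.inl v => v ∈ (e : Sym2 V)
    | Sum.inr _, Sum.inr _ => False
  symm := by
    constructor
    rintro (v | e) (w | f) h
    · exact G.adj_symm h
    · exact h
    · exact h
    · exact h
  loopless := by
    constructor
    rintro (v | e) h
    · exact G.irrefl h
    · exact h

/-- The graph `Q(G)`: obtained from `G` by inserting a new vertex into each edge of `G`,
then joining by edges those pairs of new vertices lying on adjacent edges of `G`. -/
def Qgraph {V : Type*} (G : SimpleGraph V) : SimpleGraph (V ⊕ ↥G.edgeSet) where
  Adj x y :=
    match x, y with
    | Sum.inl _, Sum.inl _ => False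
    | Sum.inl v, Sum.inr e => v ∈ (e : Sym2 V)
    | Sum.inr e, Sum.inl v => v ∈ (e : Sym2 V)
    | Sum.inr e, Sum.inr f => e ≠ f ∧ ∃ v, v ∈ (e : Sym2 V) ∧ v ∈ (f : Sym2 V)
  symm := by
    constructor
    rintro (v | e) (w | f) h
    · exact h
    · exact h
    · exact h
    · exact ⟨h.1.symm, by obtain ⟨v, h1, h2⟩ := h.2; exact ⟨v, h2, h1⟩⟩
  loopless := by
    constructor
    rintro (v | e) h
    · exact h
    · exact h.1 rfl

/-- The total graph `T(G)`: obtained from `G` by inserting a new vertex into each edge,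
joining each new vertex to the end vertices of its corresponding edge, and joining by
edges those pairs of new vertices lying on adjacent edges of `G`. -/
def Tgraph {V : Type*} (G : SimpleGraph V) : SimpleGraph (V ⊕ ↥G.edgeSet) where
  Adj x y :=
    match x, y with
    | Sum.inl v, Sum.inl w => G.Adj v w
    | Sum.inl v, Sum.inr e => v ∈ (e : Sym2 V)
    | Sum.inr e, Sum.inl v => v ∈ (e : Sym2 V)
    | Sum.inr e, Sum.inr f => e ≠ f ∧ ∃ v, v ∈ (e : Sym2 V) ∧ v ∈ (f : Sym2 V)
  symm := by
    constructor
    rintro (v | e) (w | f) h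
    · exact G.adj_symm h
    · exact h
    · exact h
    · exact ⟨h.1.symm, by obtain ⟨v, h1, h2⟩ := h.2; exact ⟨v, h2, h1⟩⟩
  loopless := by
    constructor
    rintro (v | e) h
    · exact G.irrefl h
    · exact h.1 rfl

/-- The disjoint union of `H` and `K` together with all edges joining a vertex `a` of `H`
with `P a` to every vertex of `K`. -/
def joinOn {A B : Type*} (H : SimpleGraph A) (K : SimpleGraph B) (P : A → Prop) :
    SimpleGraph (A ⊕ B) where
  Adj x y :=
    match x, y with
    | Sum.inl a, Sum.inl a' => H.Adj a a'
    | Sum.inr b, Sum.inr b' => K.Adj b b'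
    | Sum.inl a, Sum.inr _ => P a
    | Sum.inr _, Sum.inl a => P a
  symm := by
    constructor
    rintro (a | b) (a' | b') h
    · exact H.adj_symm h
    · exact h
    · exact h
    · exact K.adj_symm h
  loopless := by
    constructor
    rintro (a | b) h
    · exact H.irrefl h
    · exact K.irrefl h

/-- The vertex S-join `G₁ ∨̇_S G₂`: obtained from `S(G₁)` and `G₂` by joining each vertex
of `V(G₁)` to every vertex of `G₂`. -/
def vertexSJoin {V₁ V₂ : Type*} (G₁ : SimpleGraph V₁) (G₂ : SimpleGraph V₂) :
    SimpleGraph ((V₁ ⊕ ↥G₁.edgeSet) ⊕ V₂) :=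
  joinOn (Sgraph G₁) G₂ (fun x => x.isLeft)

/-- The edge S-join `G₁ ∨̱_S G₂`: obtained from `S(G₁)` and `G₂` by joining each inserted
vertex (each vertex of `I(G₁)`) to every vertex of `G₂`. -/
def edgeSJoin {V₁ V₂ : Type*} (G₁ : SimpleGraph V₁) (G₂ : SimpleGraph V₂) :
    SimpleGraph ((V₁ ⊕ ↥G₁.edgeSet) ⊕ V₂) :=
  joinOn (Sgraph G₁) G₂ (fun x => x.isRight)

/-- The vertex R-join `G₁ ∨̇_R G₂`. -/
def vertexRJoin {V₁ V₂ : Type*} (G₁ : SimpleGraph V₁) (G₂ : SimpleGraph V₂) :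
    SimpleGraph ((V₁ ⊕ ↥G₁.edgeSet) ⊕ V₂) :=
  joinOn (Rgraph G₁) G₂ (fun x => x.isLeft)

/-- The edge R-join `G₁ ∨̱_R G₂`. -/
def edgeRJoin {V₁ V₂ : Type*} (G₁ : SimpleGraph V₁) (G₂ : SimpleGraph V₂) :
    SimpleGraph ((V₁ ⊕ ↥G₁.edgeSet) ⊕ V₂) :=
  joinOn (Rgraph G₁) G₂ (fun x => x.isRight)

/-- The vertex Q-join `G₁ ∨̇_Q G₂`. -/
def vertexQJoin {V₁ V₂ : Type*} (G₁ : SimpleGraph V₁) (G₂ : SimpleGraph V₂) :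
    SimpleGraph ((V₁ ⊕ ↥G₁.edgeSet) ⊕ V₂) :=
  joinOn (Qgraph G₁) G₂ (fun x => x.isLeft)

/-- The edge Q-join `G₁ ∨̱_Q G₂`. -/
def edgeQJoin {V₁ V₂ : Type*} (G₁ : SimpleGraph V₁) (G₂ : SimpleGraph V₂) :
    SimpleGraph ((V₁ ⊕ ↥G₁.edgeSet) ⊕ V₂) :=
  joinOn (Qgraph G₁) G₂ (fun x => x.isRight)

/-- The vertex T-join `G₁ ∨̇_T G₂`. -/
def vertexTJoin {V₁ V₂ : Type*} (G₁ : SimpleGraph V₁) (G₂ : SimpleGraph V₂) :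
    SimpleGraph ((V₁ ⊕ ↥G₁.edgeSet) ⊕ V₂) :=
  joinOn (Tgraph G₁) G₂ (fun x => x.isLeft)

/-- The edge T-join `G₁ ∨̱_T G₂`. -/
def edgeTJoin {V₁ V₂ : Type*} (G₁ : SimpleGraph V₁) (G₂ : SimpleGraph V₂) :
    SimpleGraph ((V₁ ⊕ ↥G₁.edgeSet) ⊕ V₂) :=
  joinOn (Tgraph G₁) G₂ (fun x => x.isRight)

/-- Degree of a vertex in a graph on a finite vertex type. -/
noncomputable def gdeg {V : Type*} [Finite V] (G : SimpleGraph V) (v : V) : ℕ :=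
  haveI : Fintype ↥(G.neighborSet v) := Fintype.ofFinite _
  G.degree v

/-- The forgotten topological index (F-index): `F(G) = ∑_{v ∈ V(G)} d_G(v)³`. -/
noncomputable def Findex {V : Type*} [Finite V] (G : SimpleGraph V) : ℕ :=
  haveI := Fintype.ofFinite V
  ∑ v : V, gdeg G v ^ 3

/-- The first Zagreb index: `M₁(G) = ∑_{v ∈ V(G)} d_G(v)²`. -/
noncomputable def M1 {V : Type*} [Finite V] (G : SimpleGraph V) : ℕ :=
  haveI := Fintype.ofFinite V
  ∑ v : V, gdeg G v ^ 2

/-- `M₄(G) = ∑_{v ∈ V(G)} d_G(v)⁴`. -/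
noncomputable def M4 {V : Type*} [Finite V] (G : SimpleGraph V) : ℕ :=
  haveI := Fintype.ofFinite V
  ∑ v : V, gdeg G v ^ 4

/-- The hyper Zagreb index: `HM(G) = ∑_{uv ∈ E(G)} (d_G(u) + d_G(v))²`. -/
noncomputable def HM {V : Type*} [Finite V] (G : SimpleGraph V) : ℕ :=
  haveI : Fintype ↥G.edgeSet := Fintype.ofFinite _
  ∑ e : ↥G.edgeSet,
    Sym2.lift ⟨fun u v => (gdeg G u + gdeg G v) ^ 2,
      fun u v => by dsimp only; rw [add_comm]⟩ (e : Sym2 V)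

/-- The redefined Zagreb index:
`ReZM(G) = ∑_{uv ∈ E(G)} d_G(u) d_G(v) (d_G(u) + d_G(v))`. -/
noncomputable def ReZM {V : Type*} [Finite V] (G : SimpleGraph V) : ℕ :=
  haveI : Fintype ↥G.edgeSet := Fintype.ofFinite _
  ∑ e : ↥G.edgeSet,
    Sym2.lift ⟨fun u v => gdeg G u * gdeg G v * (gdeg G u + gdeg G v),
      fun u v => by dsimp only; ring⟩ (e : Sym2 V)

/-- The number of edges of `G`. -/
noncomputable def numEdges {V : Type*} (G : SimpleGraph V) : ℕ :=
  Nat.card ↥G.edgeSet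


section Aux

open SimpleGraph Finset

lemma gdeg_eq_ncard {V : Type*} [Finite V] (G : SimpleGraph V) (v : V) :
    gdeg G v = (G.neighborSet v).ncard := by
  haveI : Fintype ↥(G.neighborSet v) := Fintype.ofFinite _
  rw [Set.ncard_eq_toFinset_card']
  unfold gdeg SimpleGraph.degree SimpleGraph.neighborFinset
  congr!

lemma Findex_eq_sum {V : Type*} [Fintype V] (G : SimpleGraph V) :
    Findex G = ∑ v : V, gdeg G v ^ 3 := by
  unfold Findex; congr!

lemma edgeSJoin_adj_inl_inl {V₁ V₂ : Type*} {G₁ : SimpleGraph V₁} {G₂ : SimpleGraph V₂}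
    {x y : V₁ ⊕ ↥G₁.edgeSet} :
    (edgeSJoin G₁ G₂).Adj (Sum.inl x) (Sum.inl y) ↔ (Sgraph G₁).Adj x y := Iff.rfl

lemma edgeSJoin_adj_inl_inr {V₁ V₂ : Type*} {G₁ : SimpleGraph V₁} {G₂ : SimpleGraph V₂}
    {x : V₁ ⊕ ↥G₁.edgeSet} {b : V₂} :
    (edgeSJoin G₁ G₂).Adj (Sum.inl x) (Sum.inr b) ↔ x.isRight := Iff.rfl

lemma edgeSJoin_adj_inr_inl {V₁ V₂ : Type*} {G₁ : SimpleGraph V₁} {G₂ : SimpleGraph V₂}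
    {x : V₁ ⊕ ↥G₁.edgeSet} {b : V₂} :
    (edgeSJoin G₁ G₂).Adj (Sum.inr b) (Sum.inl x) ↔ x.isRight := Iff.rfl

lemma edgeSJoin_adj_inr_inr {V₁ V₂ : Type*} {G₁ : SimpleGraph V₁} {G₂ : SimpleGraph V₂}
    {b b' : V₂} :
    (edgeSJoin G₁ G₂).Adj (Sum.inr b) (Sum.inr b') ↔ G₂.Adj b b' := Iff.rfl

lemma Sgraph_adj_inl_inl {V : Type*} {G : SimpleGraph V} {v w : V} :
    ¬ (Sgraph G).Adj (Sum.inl v) (Sum.inl w) := fun h => h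

lemma Sgraph_adj_inl_inr {V : Type*} {G : SimpleGraph V} {v : V} {e : ↥G.edgeSet} :
    (Sgraph G).Adj (Sum.inl v) (Sum.inr e) ↔ v ∈ (e : Sym2 V) := Iff.rfl

lemma Sgraph_adj_inr_inl {V : Type*} {G : SimpleGraph V} {v : V} {e : ↥G.edgeSet} :
    (Sgraph G).Adj (Sum.inr e) (Sum.inl v) ↔ v ∈ (e : Sym2 V) := Iff.rfl

lemma Sgraph_adj_inr_inr {V : Type*} {G : SimpleGraph V} {e f : ↥G.edgeSet} :
    ¬ (Sgraph G).Adj (Sum.inr e) (Sum.inr f) := fun h => h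

lemma ncard_sym2_mem {α : Type*} {e : Sym2 α} (he : ¬ e.IsDiag) : {v | v ∈ e}.ncard = 2 := by
  induction e using Sym2.ind with
  | _ a b =>
    rw [Sym2.mk_isDiag_iff] at he
    have : {v | v ∈ s(a, b)} = {a, b} := by ext v; simp [Sym2.mem_iff]
    rw [this, Set.ncard_pair he]

end Aux

theorem Findex_edgeSJoin_ex13 (n m : ℕ) (hn : 3 ≤ n) (hm : 2 ≤ m) :
    (Findex (edgeSJoin (SimpleGraph.cycleGraph n) (SimpleGraph.pathGraph m)) : ℤ) =
      (n : ℤ) * (((m : ℤ) + 2) ^ 3 + 6 * (n : ℤ) * ((m : ℤ) - 1) + (m : ℤ) * (n : ℤ) ^ 2) + 12 * (m : ℤ) * (n : ℤ) + 8 * (m : ℤ) - 10 * (n : ℤ) - 14 := by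
  classical
  obtain ⟨k, rfl⟩ : ∃ k, n = k + 3 := ⟨n - 3, by omega⟩
  set n := k + 3 with hn'
  set C := SimpleGraph.cycleGraph n with hC
  set P := SimpleGraph.pathGraph m with hP
  set G := edgeSJoin C P with hG
  -- cycle degrees
  have hcd : ∀ v : Fin n, C.degree v = 2 := fun v => SimpleGraph.cycleGraph_degree_three_le
  -- number of edges of the cycle
  have hE : Fintype.card ↥C.edgeSet = n := by
    have h2 := C.sum_degrees_eq_twice_card_edges
    simp only [hcd, Finset.sum_const, Finset.card_univ, Fintype.card_fin, smul_eq_mul,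
      SimpleGraph.edgeFinset_card] at h2
    omega
  -- incidence count
  have hinc : ∀ v : Fin n, ({e : ↥C.edgeSet | v ∈ (e : Sym2 (Fin n))}).ncard = 2 := by
    intro v
    rw [← Nat.card_coe_set_eq]
    have eqv : {e : ↥C.edgeSet | v ∈ (e : Sym2 (Fin n))} ≃ ↥(C.incidenceSet v) :=
      ⟨fun x => ⟨x.1.1, x.1.2, x.2⟩, fun y => ⟨⟨y.1, y.2.1⟩, y.2.2⟩,
        fun _ => rfl, fun _ => rfl⟩
    rw [Nat.card_congr eqv, Nat.card_eq_fintype_card, SimpleGraph.card_incidenceSet_eq_degree,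
      hcd]
  -- degrees of original cycle vertices
  have hdeg1 : ∀ v : Fin n, gdeg G (Sum.inl (Sum.inl v)) = 2 := by
    intro v
    rw [gdeg_eq_ncard]
    have hNS : G.neighborSet (Sum.inl (Sum.inl v)) =
        (Sum.inl ∘ Sum.inr) '' {e : ↥C.edgeSet | v ∈ (e : Sym2 (Fin n))} := by
      ext y
      rcases y with (w | e) | b <;>
        simp [hG, SimpleGraph.mem_neighborSet, edgeSJoin_adj_inl_inl, edgeSJoin_adj_inl_inr,
          Sgraph_adj_inl_inl, Sgraph_adj_inl_inr, Set.mem_image]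
    rw [hNS, Set.ncard_image_of_injective _ (Sum.inl_injective.comp Sum.inr_injective), hinc]
  -- degrees of inserted vertices
  have hdeg2 : ∀ e : ↥C.edgeSet, gdeg G (Sum.inl (Sum.inr e)) = 2 + m := by
    intro e
    rw [gdeg_eq_ncard]
    have hNS : G.neighborSet (Sum.inl (Sum.inr e)) =
        (Sum.inl ∘ Sum.inl) '' {v | v ∈ (e : Sym2 (Fin n))} ∪
          Sum.inr '' (Set.univ : Set (Fin m)) := by
      ext y
      rcases y with (w | f) | b <;>
        simp [hG, SimpleGraph.mem_neighborSet, edgeSJoin_adj_inl_inl, edgeSJoin_adj_inl_inr,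
          Sgraph_adj_inr_inl, Sgraph_adj_inr_inr, Set.mem_image]
    rw [hNS, Set.ncard_union_eq ?hd (Set.toFinite _) (Set.toFinite _),
      Set.ncard_image_of_injective _ (Sum.inl_injective.comp Sum.inl_injective),
      Set.ncard_image_of_injective _ Sum.inr_injective,
      ncard_sym2_mem (C.not_isDiag_of_mem_edgeSet e.2), Set.ncard_univ]
    · simp
    case hd =>
      rw [Set.disjoint_left]
      rintro _ ⟨x, -, rfl⟩ ⟨y, -, h⟩
      cases h
  -- degrees of path vertices
  have hdeg3 : ∀ b : Fin m, gdeg G (Sum.inr b) = n + P.degree b := by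
    intro b
    rw [gdeg_eq_ncard]
    have hNS : G.neighborSet (Sum.inr b) =
        (Sum.inl ∘ Sum.inr) '' (Set.univ : Set ↥C.edgeSet) ∪
          Sum.inr '' (P.neighborSet b) := by
      ext y
      rcases y with (w | f) | b' <;>
        simp [hG, SimpleGraph.mem_neighborSet, edgeSJoin_adj_inr_inl, edgeSJoin_adj_inr_inr,
          Set.mem_image]
    rw [hNS, Set.ncard_union_eq ?hd (Set.toFinite _) (Set.toFinite _),
      Set.ncard_image_of_injective _ (Sum.inl_injective.comp Sum.inr_injective),
      Set.ncard_image_of_injective _ Sum.inr_injective, Set.ncard_univ,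
      Nat.card_eq_fintype_card, hE]
    · congr 1
      rw [Set.ncard_eq_toFinset_card', ← SimpleGraph.card_neighborSet_eq_degree,
        Set.toFinset_card]
    case hd =>
      rw [Set.disjoint_left]
      rintro _ ⟨x, -, rfl⟩ ⟨y, -, h⟩
      cases h
  -- path degrees
  have hpdeg : ∀ b : Fin m, P.degree b = if b.1 = 0 ∨ b.1 = m - 1 then 1 else 2 := by
    intro b
    have h1 : P.neighborFinset b = Finset.univ.filter (P.Adj b) := by
      ext c; simp
    have h2 : P.degree b = (Finset.univ.filter (P.Adj b)).card := by
      rw [← h1]; rfl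
    rw [h2]
    by_cases hb0 : b.1 = 0
    · rw [if_pos (Or.inl hb0)]
      have : Finset.univ.filter (P.Adj b) = {(⟨1, by omega⟩ : Fin m)} := by
        ext c
        simp only [Finset.mem_filter, Finset.mem_univ, true_and, Finset.mem_singleton,
          hP, SimpleGraph.pathGraph_adj, Fin.ext_iff]
        have := c.isLt
        omega
      rw [this, Finset.card_singleton]
    · by_cases hbm : b.1 = m - 1
      · rw [if_pos (Or.inr hbm)]
        have : Finset.univ.filter (P.Adj b) = {(⟨m - 2, by omega⟩ : Fin m)} := by
          ext c
          simp only [Finset.mem_filter, Finset.mem_univ, true_and, Finset.mem_singleton,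
            hP, SimpleGraph.pathGraph_adj, Fin.ext_iff]
          have := c.isLt
          have := b.isLt
          omega
        rw [this, Finset.card_singleton]
      · rw [if_neg (by tauto)]
        have hb : b.1 < m := b.isLt
        have : Finset.univ.filter (P.Adj b) =
            {(⟨b.1 - 1, by omega⟩ : Fin m), ⟨b.1 + 1, by omega⟩} := by
          ext c
          simp only [Finset.mem_filter, Finset.mem_univ, true_and, Finset.mem_insert,
            Finset.mem_singleton, hP, SimpleGraph.pathGraph_adj, Fin.ext_iff]
          have := c.isLt
          omega
        have hne : (⟨b.1 - 1, by omega⟩ : Fin m) ∉ ({⟨b.1 + 1, by omega⟩} : Finset (Fin m)) := by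
          simp only [Finset.mem_singleton, Fin.ext_iff]
          omega
        rw [this, Finset.card_insert_of_notMem hne, Finset.card_singleton]
  -- assemble
  have hcard1 : (Finset.univ.filter (fun b : Fin m => b.1 = 0 ∨ b.1 = m - 1)).card = 2 := by
    have h : Finset.univ.filter (fun b : Fin m => b.1 = 0 ∨ b.1 = m - 1) =
        {(⟨0, by omega⟩ : Fin m), ⟨m - 1, by omega⟩} := by
      ext c
      simp [Fin.ext_iff]
    have hne : (⟨0, by omega⟩ : Fin m) ∉ ({⟨m - 1, by omega⟩} : Finset (Fin m)) := by
      simp only [Finset.mem_singleton, Fin.ext_iff]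
      omega
    rw [h, Finset.card_insert_of_notMem hne, Finset.card_singleton]
  have hcard2 : (Finset.univ.filter (fun b : Fin m => ¬(b.1 = 0 ∨ b.1 = m - 1))).card = m - 2 := by
    have h := Finset.card_filter_add_card_filter_not
      (s := (Finset.univ : Finset (Fin m))) (p := fun b : Fin m => b.1 = 0 ∨ b.1 = m - 1)
    rw [hcard1, Finset.card_univ, Fintype.card_fin] at h
    omega
  have hFin : Findex G =
      n * 2 ^ 3 + n * (2 + m) ^ 3 + (2 * (n + 1) ^ 3 + (m - 2) * (n + 2) ^ 3) := by
    rw [Findex_eq_sum, Fintype.sum_sum_type, Fintype.sum_sum_type]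
    simp only [hdeg1, hdeg2, hdeg3, hpdeg, apply_ite (fun d : ℕ => (n + d) ^ 3)]
    rw [Finset.sum_ite]
    simp only [Finset.sum_const, smul_eq_mul, hcard1, hcard2, Finset.card_univ,
      Fintype.card_fin, hE]
  rw [hFin]
  push_cast [Nat.cast_sub hm]
  ring
end

section
/- For integers n, m ≥ 3, the F-index of the edge Q-join of the cycle C_n and the cycle C_m is F(C_n ∨̱_Q C_m) = mn(m² + n²) + 12m²n + 6mn² + 60mn + 8m + 72n. -/
section AuxLemmas

open SimpleGraph

lemma gdeg_eq_natCard {V : Type*} [Finite V] (G : SimpleGraph V) (v : V) :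
    gdeg G v = Nat.card (G.neighborSet v) := by
  unfold gdeg
  letI : Fintype ↥(G.neighborSet v) := Fintype.ofFinite _
  rw [← SimpleGraph.card_neighborSet_eq_degree, Nat.card_eq_fintype_card]

lemma Findex_eq {V : Type*} [Fintype V] (G : SimpleGraph V) :
    Findex G = ∑ v : V, Nat.card (G.neighborSet v) ^ 3 := by
  unfold Findex
  rw [Subsingleton.elim (Fintype.ofFinite V) ‹Fintype V›]
  exact Finset.sum_congr rfl fun v _ => by rw [gdeg_eq_natCard]

lemma card_incident {V : Type*} [Fintype V] [DecidableEq V] (G : SimpleGraph V)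
    [DecidableRel G.Adj] (v : V) :
    Nat.card {e : G.edgeSet // v ∈ (e : Sym2 V)} = G.degree v := by
  have eqv : {e : G.edgeSet // v ∈ (e : Sym2 V)} ≃ G.incidenceSet v :=
    { toFun := fun x => ⟨x.1.1, x.1.2, x.2⟩
      invFun := fun x => ⟨⟨x.1, x.2.1⟩, x.2.2⟩
      left_inv := fun x => rfl
      right_inv := fun x => rfl }
  rw [Nat.card_congr eqv, Nat.card_eq_fintype_card, SimpleGraph.card_incidenceSet_eq_degree]

lemma card_mem_sym2 {V : Type*} (u v : V) (h : u ≠ v) :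
    Nat.card {w : V // w ∈ (s(u, v) : Sym2 V)} = 2 := by
  have eqv : {w : V // w ∈ (s(u, v) : Sym2 V)} ≃ ↥({u, v} : Set V) :=
    Equiv.subtypeEquivRight (fun w => by simp [Sym2.mem_iff])
  rw [Nat.card_congr eqv, Nat.card_coe_set_eq, Set.ncard_pair h]

lemma card_mem_sym2' {V : Type*} (G : SimpleGraph V) (e : G.edgeSet) :
    Nat.card {w : V // w ∈ (e : Sym2 V)} = 2 := by
  obtain ⟨s, hs⟩ := e
  induction s using Sym2.ind with
  | _ u v => exact card_mem_sym2 u v ((SimpleGraph.mem_edgeSet _).mp hs).ne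

lemma card_sharing {V : Type*} [Fintype V] [DecidableEq V] (G : SimpleGraph V)
    [DecidableRel G.Adj] (hdeg : ∀ v, G.degree v = 2) (e : G.edgeSet) :
    Nat.card {f : G.edgeSet // e ≠ f ∧ ∃ x, x ∈ (e : Sym2 V) ∧ x ∈ (f : Sym2 V)} = 2 := by
  obtain ⟨s, hs⟩ := e
  induction s using Sym2.ind with
  | _ u v =>
  have hadj : G.Adj u v := hs
  have huv : u ≠ v := hadj.ne
  set S : Finset (Sym2 V) := (G.incidenceFinset u ∪ G.incidenceFinset v).erase s(u, v) with hS
  have hsub : ∀ t ∈ S, t ∈ G.edgeSet := by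
    intro t ht
    rw [hS, Finset.mem_erase, Finset.mem_union, SimpleGraph.mem_incidenceFinset,
      SimpleGraph.mem_incidenceFinset] at ht
    rcases ht.2 with h | h
    · exact h.1
    · exact h.1
  have key : ∀ f : G.edgeSet,
      ((⟨s(u, v), hs⟩ : G.edgeSet) ≠ f ∧ ∃ x, x ∈ (s(u, v) : Sym2 V) ∧ x ∈ (f : Sym2 V)) ↔
        (f : Sym2 V) ∈ S := by
    rintro ⟨t, ht⟩
    rw [hS, Finset.mem_erase, Finset.mem_union, SimpleGraph.mem_incidenceFinset,
      SimpleGraph.mem_incidenceFinset]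
    constructor
    · rintro ⟨hne, x, hx1, hx2⟩
      refine ⟨fun h => hne (Subtype.ext h.symm), ?_⟩
      rw [Sym2.mem_iff] at hx1
      rcases hx1 with rfl | rfl
      · exact Or.inl ⟨ht, hx2⟩
      · exact Or.inr ⟨ht, hx2⟩
    · rintro ⟨hne, h | h⟩
      · exact ⟨fun hh => hne (congrArg Subtype.val hh).symm, u, by simp, h.2⟩
      · exact ⟨fun hh => hne (congrArg Subtype.val hh).symm, v, by simp, h.2⟩
  have eqv : {f : G.edgeSet //
      (⟨s(u, v), hs⟩ : G.edgeSet) ≠ f ∧ ∃ x, x ∈ (s(u, v) : Sym2 V) ∧ x ∈ (f : Sym2 V)} ≃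
      {t : Sym2 V // t ∈ S} :=
    { toFun := fun x => ⟨x.1.1, (key x.1).1 x.2⟩
      invFun := fun x => ⟨⟨x.1, hsub x.1 x.2⟩, (key ⟨x.1, hsub x.1 x.2⟩).2 x.2⟩
      left_inv := fun x => rfl
      right_inv := fun x => rfl }
  rw [Nat.card_congr eqv, Nat.card_eq_finsetCard]
  have hmem : s(u, v) ∈ G.incidenceFinset u ∪ G.incidenceFinset v := by
    rw [Finset.mem_union, SimpleGraph.mem_incidenceFinset]
    exact Or.inl ⟨hs, by simp⟩
  have hinter : G.incidenceFinset u ∩ G.incidenceFinset v = {s(u, v)} := by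
    ext t
    rw [Finset.mem_inter, SimpleGraph.mem_incidenceFinset, SimpleGraph.mem_incidenceFinset,
      Finset.mem_singleton]
    constructor
    · rintro ⟨⟨ht, hu'⟩, _, hv'⟩
      exact (Sym2.mem_and_mem_iff huv).mp ⟨hu', hv'⟩
    · rintro rfl
      exact ⟨⟨hs, by simp⟩, hs, by simp⟩
  have hcu := Finset.card_union_add_card_inter (G.incidenceFinset u) (G.incidenceFinset v)
  rw [hinter, SimpleGraph.card_incidenceFinset_eq_degree, SimpleGraph.card_incidenceFinset_eq_degree,
    hdeg u, hdeg v, Finset.card_singleton] at hcu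
  rw [hS, Finset.card_erase_of_mem hmem]
  omega

end AuxLemmas

section NeighborEquivs

variable {V₁ V₂ : Type*} (G₁ : SimpleGraph V₁) (G₂ : SimpleGraph V₂)

def nequiv1 (v : V₁) :
    ((edgeQJoin G₁ G₂).neighborSet (Sum.inl (Sum.inl v))) ≃
      {e : G₁.edgeSet // v ∈ (e : Sym2 V₁)} where
  toFun := fun x =>
    match x with
    | ⟨Sum.inl (Sum.inl _), h⟩ => False.elim h
    | ⟨Sum.inl (Sum.inr e), h⟩ => ⟨e, h⟩
    | ⟨Sum.inr _, h⟩ => Bool.noConfusion h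
  invFun := fun x => ⟨Sum.inl (Sum.inr x.1), x.2⟩
  left_inv := by rintro ⟨(w | e) | b, h⟩ <;> first | rfl | exact False.elim h | exact Bool.noConfusion h
  right_inv := fun x => rfl

def nequiv2 (e : G₁.edgeSet) :
    ((edgeQJoin G₁ G₂).neighborSet (Sum.inl (Sum.inr e))) ≃
      ({w : V₁ // w ∈ (e : Sym2 V₁)} ⊕
        ({f : G₁.edgeSet // e ≠ f ∧ ∃ x, x ∈ (e : Sym2 V₁) ∧ x ∈ (f : Sym2 V₁)} ⊕ V₂)) where
  toFun := fun x =>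
    match x with
    | ⟨Sum.inl (Sum.inl w), h⟩ => Sum.inl ⟨w, h⟩
    | ⟨Sum.inl (Sum.inr f), h⟩ => Sum.inr (Sum.inl ⟨f, h⟩)
    | ⟨Sum.inr b, _⟩ => Sum.inr (Sum.inr b)
  invFun := fun x =>
    match x with
    | Sum.inl ⟨w, h⟩ => ⟨Sum.inl (Sum.inl w), h⟩
    | Sum.inr (Sum.inl ⟨f, h⟩) => ⟨Sum.inl (Sum.inr f), h⟩
    | Sum.inr (Sum.inr b) => ⟨Sum.inr b, rfl⟩
  left_inv := by rintro ⟨(w | f) | b, h⟩ <;> rfl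
  right_inv := by rintro (⟨w, h⟩ | (⟨f, h⟩ | b)) <;> rfl

def nequiv3 (b : V₂) :
    ((edgeQJoin G₁ G₂).neighborSet (Sum.inr b)) ≃ (G₁.edgeSet ⊕ G₂.neighborSet b) where
  toFun := fun x =>
    match x with
    | ⟨Sum.inl (Sum.inl _), h⟩ => Bool.noConfusion h
    | ⟨Sum.inl (Sum.inr e), _⟩ => Sum.inl e
    | ⟨Sum.inr b', h⟩ => Sum.inr ⟨b', h⟩
  invFun := fun x =>
    match x with
    | Sum.inl e => ⟨Sum.inl (Sum.inr e), rfl⟩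
    | Sum.inr ⟨b', h⟩ => ⟨Sum.inr b', h⟩
  left_inv := by rintro ⟨(w | e) | b', h⟩ <;> first | rfl | exact Bool.noConfusion h
  right_inv := by rintro (e | ⟨b', h⟩) <;> rfl

end NeighborEquivs

lemma card_edgeSet_cycle (k : ℕ) :
    Nat.card (SimpleGraph.cycleGraph (k + 3)).edgeSet = k + 3 := by
  classical
  have h := SimpleGraph.sum_degrees_eq_twice_card_edges (SimpleGraph.cycleGraph (k + 3))
  simp only [SimpleGraph.cycleGraph_degree_three_le, Finset.sum_const, Finset.card_univ,
    Fintype.card_fin, smul_eq_mul] at h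
  rw [Nat.card_eq_fintype_card, ← SimpleGraph.edgeFinset_card]
  omega

theorem Findex_edgeQJoin_ex17 (n m : ℕ) (hn : 3 ≤ n) (hm : 3 ≤ m) :
    (Findex (edgeQJoin (SimpleGraph.cycleGraph n) (SimpleGraph.cycleGraph m)) : ℤ) =
      (m : ℤ) * (n : ℤ) * ((m : ℤ) ^ 2 + (n : ℤ) ^ 2) + 12 * (m : ℤ) ^ 2 * (n : ℤ) + 6 * (m : ℤ) * (n : ℤ) ^ 2 + 60 * (m : ℤ) * (n : ℤ) + 8 * (m : ℤ) + 72 * (n : ℤ) := by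
  obtain ⟨a, rfl⟩ : ∃ a, n = a + 3 := ⟨n - 3, by omega⟩
  obtain ⟨b, rfl⟩ : ∃ b, m = b + 3 := ⟨m - 3, by omega⟩
  classical
  have h1 : ∀ v : Fin (a + 3),
      Nat.card ((edgeQJoin (SimpleGraph.cycleGraph (a + 3)) (SimpleGraph.cycleGraph (b + 3))).neighborSet
        (Sum.inl (Sum.inl v))) = 2 := by
    intro v
    rw [Nat.card_congr (nequiv1 _ _ v), card_incident,
      SimpleGraph.cycleGraph_degree_three_le]
  have h2 : ∀ e : (SimpleGraph.cycleGraph (a + 3)).edgeSet,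
      Nat.card ((edgeQJoin (SimpleGraph.cycleGraph (a + 3)) (SimpleGraph.cycleGraph (b + 3))).neighborSet
        (Sum.inl (Sum.inr e))) = (b + 3) + 4 := by
    intro e
    rw [Nat.card_congr (nequiv2 _ _ e), Nat.card_sum, Nat.card_sum,
      card_sharing _ (fun v => SimpleGraph.cycleGraph_degree_three_le) e,
      card_mem_sym2' _ e, Nat.card_eq_fintype_card, Fintype.card_fin]
    omega
  have h3 : ∀ w : Fin (b + 3),
      Nat.card ((edgeQJoin (SimpleGraph.cycleGraph (a + 3)) (SimpleGraph.cycleGraph (b + 3))).neighborSet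
        (Sum.inr w)) = (a + 3) + 2 := by
    intro w
    rw [Nat.card_congr (nequiv3 _ _ w), Nat.card_sum, card_edgeSet_cycle,
      Nat.card_eq_fintype_card, SimpleGraph.card_neighborSet_eq_degree,
      SimpleGraph.cycleGraph_degree_three_le]
  have hE : Fintype.card (SimpleGraph.cycleGraph (a + 3)).edgeSet = a + 3 := by
    rw [← Nat.card_eq_fintype_card]; exact card_edgeSet_cycle a
  rw [Findex_eq, Fintype.sum_sum_type, Fintype.sum_sum_type]
  simp only [h1, h2, h3, Finset.sum_const, Finset.card_univ, Fintype.card_fin, hE, smul_eq_mul]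
  push_cast
  ring
end

section
/- For integers n, m ≥ 3, the F-index of the edge T-join of the cycle C_n and the cycle C_m is F(C_n ∨̱_T C_m) = m³n + 12m²n + mn²(n + 6) + 60mn + 8m + 128n. -/
section Aux
open SimpleGraph Sum Finset

lemma gdeg_eq_card {V : Type*} [Finite V] (G : SimpleGraph V) (v : V) :
    gdeg G v = Nat.card {w // G.Adj v w} := by
  letI : Fintype ↥(G.neighborSet v) := Fintype.ofFinite _
  unfold gdeg
  rw [← SimpleGraph.card_neighborSet_eq_degree, ← Nat.card_eq_fintype_card]
  rfl

lemma cyc_degree {n : ℕ} (hn : 3 ≤ n) (v : Fin n) : (cycleGraph n).degree v = 2 := by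
  obtain ⟨k, rfl⟩ := Nat.exists_eq_add_of_le' hn
  exact cycleGraph_degree_three_le

lemma L1 {n : ℕ} (hn : 3 ≤ n) (v : Fin n) :
    Nat.card {w : Fin n // (cycleGraph n).Adj v w} = 2 := by
  rw [Nat.card_eq_fintype_card]
  exact (SimpleGraph.card_neighborSet_eq_degree _ _).trans (cyc_degree hn v)

lemma L2 {n : ℕ} (hn : 3 ≤ n) (v : Fin n) :
    Nat.card {e : ↥(cycleGraph n).edgeSet // v ∈ (e : Sym2 (Fin n))} = 2 := by
  rw [Nat.card_congr ⟨fun x => (⟨x.1.1, x.1.2, x.2⟩ : ↥((cycleGraph n).incidenceSet v)),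
    fun s => ⟨⟨s.1, s.2.1⟩, s.2.2⟩, fun _ => rfl, fun _ => rfl⟩]
  rw [Nat.card_eq_fintype_card, SimpleGraph.card_incidenceSet_eq_degree]
  exact cyc_degree hn v

lemma L3 {n : ℕ} (hn : 3 ≤ n) : Nat.card ↥(cycleGraph n).edgeSet = n := by
  have h := (cycleGraph n).sum_degrees_eq_twice_card_edges
  rw [Finset.sum_congr rfl (fun v _ => cyc_degree hn v), Finset.sum_const,
    Finset.card_univ, Fintype.card_fin, smul_eq_mul] at h
  rw [Nat.card_eq_fintype_card, ← SimpleGraph.edgeFinset_card]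
  omega

lemma L4 {n : ℕ} (hn : 3 ≤ n) (e : ↥(cycleGraph n).edgeSet) :
    Nat.card {f : ↥(cycleGraph n).edgeSet //
      e ≠ f ∧ ∃ w, w ∈ (e : Sym2 (Fin n)) ∧ w ∈ (f : Sym2 (Fin n))} = 2 := by
  classical
  obtain ⟨s, hs⟩ := e
  induction s with
  | h u v =>
    have huv : (cycleGraph n).Adj u v := hs
    have hne : u ≠ v := huv.ne
    set E := ↥(cycleGraph n).edgeSet
    set e : E := ⟨s(u, v), hs⟩ with he
    set A : Finset E := univ.filter (fun f : E => u ∈ (f : Sym2 (Fin n))) with hA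
    set B : Finset E := univ.filter (fun f : E => v ∈ (f : Sym2 (Fin n))) with hB
    have hAc : A.card = 2 := by
      rw [hA, ← Fintype.card_subtype, ← Nat.card_eq_fintype_card]; exact L2 hn u
    have hBc : B.card = 2 := by
      rw [hB, ← Fintype.card_subtype, ← Nat.card_eq_fintype_card]; exact L2 hn v
    have hABi : A ∩ B = {e} := by
      ext f
      simp only [hA, hB, Finset.mem_inter, Finset.mem_filter, Finset.mem_univ, true_and,
        Finset.mem_singleton]
      constructor
      · rintro ⟨h1, h2⟩
        exact Subtype.ext ((Sym2.mem_and_mem_iff hne).mp ⟨h1, h2⟩)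
      · rintro rfl
        exact ⟨Sym2.mem_mk_left u v, Sym2.mem_mk_right u v⟩
    have hU : (A ∪ B).card = 3 := by
      have := Finset.card_union_add_card_inter A B
      rw [hABi, Finset.card_singleton, hAc, hBc] at this
      omega
    have heU : e ∈ A ∪ B := by
      rw [Finset.mem_union, hA, Finset.mem_filter]
      exact Or.inl ⟨Finset.mem_univ _, Sym2.mem_mk_left u v⟩
    rw [Nat.card_eq_fintype_card, Fintype.card_subtype]
    have hT : univ.filter (fun f : E =>
        e ≠ f ∧ ∃ w, w ∈ (e : Sym2 (Fin n)) ∧ w ∈ (f : Sym2 (Fin n))) = (A ∪ B).erase e := by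
      ext f
      simp only [Finset.mem_filter, Finset.mem_univ, true_and, Finset.mem_erase,
        Finset.mem_union, hA, hB, Finset.mem_filter, Finset.mem_univ, true_and]
      constructor
      · rintro ⟨h1, w, hw1, hw2⟩
        refine ⟨Ne.symm h1, ?_⟩
        replace hw1 : w = u ∨ w = v := Sym2.mem_iff.mp hw1
        rcases hw1 with rfl | rfl
        · exact Or.inl hw2
        · exact Or.inr hw2
      · rintro ⟨h1, h2 | h2⟩
        · exact ⟨Ne.symm h1, u, Sym2.mem_mk_left u v, h2⟩
        · exact ⟨Ne.symm h1, v, Sym2.mem_mk_right u v, h2⟩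
    rw [hT, Finset.card_erase_of_mem heU, hU]

lemma L5 {n : ℕ} (e : ↥(cycleGraph n).edgeSet) :
    Nat.card {v : Fin n // v ∈ (e : Sym2 (Fin n))} = 2 := by
  classical
  obtain ⟨s, hs⟩ := e
  induction s with
  | h u v =>
    have hne : u ≠ v := (hs : (cycleGraph n).Adj u v).ne
    rw [Nat.card_eq_fintype_card, Fintype.card_subtype]
    have : univ.filter (fun w : Fin n => w ∈ (s(u, v) : Sym2 (Fin n))) = {u, v} := by
      ext w
      simp [Sym2.mem_iff]
    rw [this, Finset.card_pair hne]

section Degrees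

variable {n m : ℕ}

lemma deg_orig (hn : 3 ≤ n) (hm : 3 ≤ m) (v : Fin n) :
    gdeg (edgeTJoin (cycleGraph n) (cycleGraph m)) (inl (inl v)) = 4 := by
  rw [gdeg_eq_card, Nat.card_congr Equiv.subtypeSum, Nat.card_sum,
    Nat.card_congr (Equiv.subtypeSum (p := fun a => (edgeTJoin (cycleGraph n) (cycleGraph m)).Adj (inl (inl v)) (inl a))), Nat.card_sum]
  have h1 : Nat.card {w : Fin n //
      (edgeTJoin (cycleGraph n) (cycleGraph m)).Adj (inl (inl v)) (inl (inl w))} = 2 := by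
    exact (Nat.card_congr (Equiv.subtypeEquivRight
      (q := fun w : Fin n => (cycleGraph n).Adj v w) (fun w => Iff.rfl))).trans (L1 hn v)
  have h2 : Nat.card {e : ↥(cycleGraph n).edgeSet //
      (edgeTJoin (cycleGraph n) (cycleGraph m)).Adj (inl (inl v)) (inl (inr e))} = 2 := by
    exact (Nat.card_congr (Equiv.subtypeEquivRight
      (q := fun e : ↥(cycleGraph n).edgeSet => v ∈ (e : Sym2 (Fin n))) (fun e => Iff.rfl))).trans (L2 hn v)
  have h3 : Nat.card {b : Fin m //
      (edgeTJoin (cycleGraph n) (cycleGraph m)).Adj (inl (inl v)) (inr b)} = 0 := by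
    haveI : IsEmpty {b : Fin m //
        (edgeTJoin (cycleGraph n) (cycleGraph m)).Adj (inl (inl v)) (inr b)} :=
      ⟨fun x => Bool.false_ne_true x.2⟩
    exact Nat.card_of_isEmpty
  omega

lemma deg_ins (hn : 3 ≤ n) (hm : 3 ≤ m) (e : ↥(cycleGraph n).edgeSet) :
    gdeg (edgeTJoin (cycleGraph n) (cycleGraph m)) (inl (inr e)) = m + 4 := by
  rw [gdeg_eq_card, Nat.card_congr Equiv.subtypeSum, Nat.card_sum,
    Nat.card_congr (Equiv.subtypeSum (p := fun a => (edgeTJoin (cycleGraph n) (cycleGraph m)).Adj (inl (inr e)) (inl a))), Nat.card_sum]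
  have h1 : Nat.card {w : Fin n //
      (edgeTJoin (cycleGraph n) (cycleGraph m)).Adj (inl (inr e)) (inl (inl w))} = 2 := by
    exact (Nat.card_congr (Equiv.subtypeEquivRight
      (q := fun w : Fin n => w ∈ (e : Sym2 (Fin n))) (fun w => Iff.rfl))).trans (L5 e)
  have h2 : Nat.card {f : ↥(cycleGraph n).edgeSet //
      (edgeTJoin (cycleGraph n) (cycleGraph m)).Adj (inl (inr e)) (inl (inr f))} = 2 := by
    exact (Nat.card_congr (Equiv.subtypeEquivRight
      (q := fun f : ↥(cycleGraph n).edgeSet =>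
        e ≠ f ∧ ∃ w, w ∈ (e : Sym2 (Fin n)) ∧ w ∈ (f : Sym2 (Fin n))) (fun f => Iff.rfl))).trans (L4 hn e)
  have h3 : Nat.card {b : Fin m //
      (edgeTJoin (cycleGraph n) (cycleGraph m)).Adj (inl (inr e)) (inr b)} = m := by
    exact (Nat.card_congr (Equiv.subtypeUnivEquiv (fun b => rfl))).trans (by simp [Nat.card_eq_fintype_card])
  omega

lemma deg_right (hn : 3 ≤ n) (hm : 3 ≤ m) (w : Fin m) :
    gdeg (edgeTJoin (cycleGraph n) (cycleGraph m)) (inr w) = n + 2 := by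
  rw [gdeg_eq_card, Nat.card_congr Equiv.subtypeSum, Nat.card_sum,
    Nat.card_congr (Equiv.subtypeSum (p := fun a => (edgeTJoin (cycleGraph n) (cycleGraph m)).Adj (inr w) (inl a))), Nat.card_sum]
  have h1 : Nat.card {v : Fin n //
      (edgeTJoin (cycleGraph n) (cycleGraph m)).Adj (inr w) (inl (inl v))} = 0 := by
    haveI : IsEmpty {v : Fin n //
        (edgeTJoin (cycleGraph n) (cycleGraph m)).Adj (inr w) (inl (inl v))} :=
      ⟨fun x => Bool.false_ne_true x.2⟩
    exact Nat.card_of_isEmpty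
  have h2 : Nat.card {e : ↥(cycleGraph n).edgeSet //
      (edgeTJoin (cycleGraph n) (cycleGraph m)).Adj (inr w) (inl (inr e))} = n := by
    exact (Nat.card_congr (Equiv.subtypeUnivEquiv (fun e => rfl))).trans (L3 hn)
  have h3 : Nat.card {b : Fin m //
      (edgeTJoin (cycleGraph n) (cycleGraph m)).Adj (inr w) (inr b)} = 2 := by
    exact (Nat.card_congr (Equiv.subtypeEquivRight
      (q := fun b : Fin m => (cycleGraph m).Adj w b) (fun b => Iff.rfl))).trans (L1 hm w)
  omega

end Degrees

end Aux

theorem Findex_edgeTJoin_ex19 (n m : ℕ) (hn : 3 ≤ n) (hm : 3 ≤ m) :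
    (Findex (edgeTJoin (SimpleGraph.cycleGraph n) (SimpleGraph.cycleGraph m)) : ℤ) =
      (m : ℤ) ^ 3 * (n : ℤ) + 12 * (m : ℤ) ^ 2 * (n : ℤ) + (m : ℤ) * (n : ℤ) ^ 2 * ((n : ℤ) + 6) + 60 * (m : ℤ) * (n : ℤ) + 8 * (m : ℤ) + 128 * (n : ℤ) := by
  classical
  have key : Findex (edgeTJoin (SimpleGraph.cycleGraph n) (SimpleGraph.cycleGraph m)) =
      n * 4 ^ 3 + n * (m + 4) ^ 3 + m * (n + 2) ^ 3 := by
    unfold Findex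
    rw [Subsingleton.elim (Fintype.ofFinite _)
      (inferInstance : Fintype ((Fin n ⊕ ↥(SimpleGraph.cycleGraph n).edgeSet) ⊕ Fin m))]
    rw [Fintype.sum_sum_type, Fintype.sum_sum_type]
    simp only [deg_orig hn hm, deg_ins hn hm, deg_right hn hm, Finset.sum_const,
      Finset.card_univ, Fintype.card_fin, smul_eq_mul]
    rw [← Nat.card_eq_fintype_card, L3 hn]
  rw [key]
  push_cast
  ring
end
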